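/- arXiv:1510.05057 — 2 statements merged into one kernel-verified Lean document; each statement's English description precedes it below -/
import Mathlib

section
/- Let Q₈ be the subgroup of SU(2) generated by the matrices diag(i, -i) and [[0, 1], [-1, 0]], and let G be the subgroup of SU(2) generated by Q₈ together with the matrix A₀ = (1/2)·[[1+i, 1+i], [-1+i, 1-i]]. Then the commutator subgroup of G equals Q₈, i.e. [G, G] = Q₈. -/
open Matrix Complex

/-- The matrix `A₀ = (1/2)·[[1+i, 1+i], [-1+i, 1-i]]` from the homogeneous-space
description of the Gauss image of the isoparametric hypersurface with `g = 3`, `n = 3`. -/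
noncomputable def A₀ : Matrix (Fin 2) (Fin 2) ℂ :=
  (2 : ℂ)⁻¹ • !![1 + I, 1 + I; -1 + I, 1 - I]

/-- The special unitary group `SU(2)`, realized as the subgroup of the unitary group
`Matrix.unitaryGroup (Fin 2) ℂ` consisting of the matrices of determinant one. -/
def SU2 : Subgroup (Matrix.unitaryGroup (Fin 2) ℂ) where
  carrier := {A | Matrix.det (A : Matrix (Fin 2) (Fin 2) ℂ) = 1}
  one_mem' := by simp
  mul_mem' := by
    intro a b ha hb
    simp only [Set.mem_setOf_eq, Submonoid.coe_mul, Matrix.det_mul] at *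
    rw [ha, hb, mul_one]
  inv_mem' := by
    intro a ha
    have h : ((a⁻¹ : Matrix.unitaryGroup (Fin 2) ℂ) : Matrix (Fin 2) (Fin 2) ℂ) *
        (a : Matrix (Fin 2) (Fin 2) ℂ) = 1 := by
      have := congrArg (Subtype.val) (inv_mul_cancel a)
      simpa using this
    have hdet := congrArg Matrix.det h
    rw [Matrix.det_mul, Matrix.det_one] at hdet
    simp only [Set.mem_setOf_eq] at *
    rwa [ha, mul_one] at hdet

/-- The underlying 2×2 matrix of an element of `SU2`. -/
def SU2.mat (x : SU2) : Matrix (Fin 2) (Fin 2) ℂ :=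
  ((x : Matrix.unitaryGroup (Fin 2) ℂ) : Matrix (Fin 2) (Fin 2) ℂ)

lemma SU2.mat_mul (x y : SU2) : SU2.mat (x * y) = SU2.mat x * SU2.mat y := rfl

lemma SU2.mat_inj {x y : SU2} (h : SU2.mat x = SU2.mat y) : x = y :=
  Subtype.ext (Subtype.ext h)

set_option maxHeartbeats 4000000 in
/-- Let `Q₈` be the subgroup of `SU(2)` generated by `diag(i, -i)` and `[[0,1],[-1,0]]`,
and let `G` be the subgroup of `SU(2)` generated by `Q₈` together with `A₀`.
Then the commutator subgroup of `G` equals `Q₈`. -/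
theorem commutator_subgroup_eq_Q₈ (d j a : SU2)
    (hd : ((d : Matrix.unitaryGroup (Fin 2) ℂ) : Matrix (Fin 2) (Fin 2) ℂ) = !![I, 0; 0, -I])
    (hj : ((j : Matrix.unitaryGroup (Fin 2) ℂ) : Matrix (Fin 2) (Fin 2) ℂ) = !![0, 1; -1, 0])
    (ha : ((a : Matrix.unitaryGroup (Fin 2) ℂ) : Matrix (Fin 2) (Fin 2) ℂ) = A₀) :
    ⁅(Subgroup.closure {d, j, a} : Subgroup SU2), (Subgroup.closure {d, j, a} : Subgroup SU2)⁆ =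
      Subgroup.closure {d, j} := by
  set G : Subgroup SU2 := Subgroup.closure {d, j, a} with hG
  set K : Subgroup SU2 := Subgroup.closure {d, j} with hK
  -- matrix relations
  have R1 : a * d = j * a := by
    have hd' : SU2.mat d = !![I, 0; 0, -I] := hd
    have hj' : SU2.mat j = !![0, 1; -1, 0] := hj
    have ha' : SU2.mat a = A₀ := ha
    apply SU2.mat_inj
    rw [SU2.mat_mul, SU2.mat_mul, ha', hd', hj', A₀, Matrix.smul_mul, Matrix.mul_smul, Matrix.mul_fin_two,
      Matrix.mul_fin_two]
    congr 1
    ext i k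
    fin_cases i <;> fin_cases k <;> simp <;>
      first | ring1 | linear_combination Complex.I_sq | linear_combination -Complex.I_sq
  have R2 : a * j = (d * j) * a := by
    have hd' : SU2.mat d = !![I, 0; 0, -I] := hd
    have hj' : SU2.mat j = !![0, 1; -1, 0] := hj
    have ha' : SU2.mat a = A₀ := ha
    apply SU2.mat_inj
    rw [SU2.mat_mul, SU2.mat_mul, SU2.mat_mul, ha', hd', hj', A₀, Matrix.smul_mul, Matrix.mul_smul, Matrix.mul_fin_two,
      Matrix.mul_fin_two, Matrix.mul_fin_two]
    congr 1
    ext i k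
    fin_cases i <;> fin_cases k <;> simp <;>
      first | ring1 | linear_combination Complex.I_sq | linear_combination -Complex.I_sq
  -- basic memberships
  have dK : d ∈ K := Subgroup.subset_closure (by simp)
  have jK : j ∈ K := Subgroup.subset_closure (by simp)
  have dG : d ∈ G := Subgroup.subset_closure (by simp)
  have jG : j ∈ G := Subgroup.subset_closure (by simp)
  have aG : a ∈ G := Subgroup.subset_closure (by simp)
  -- conjugation relations
  have hada : a * d * a⁻¹ = j := by rw [mul_inv_eq_iff_eq_mul, R1]
  have haja : a * j * a⁻¹ = d * j := by rw [mul_inv_eq_iff_eq_mul, R2]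
  have hinvj : a⁻¹ * j * a = d := by rw [← hada]; group
  have hinvd : a⁻¹ * d * a = j * d⁻¹ := by
    have hd' : d = a * j * a⁻¹ * j⁻¹ := by rw [haja]; group
    have h1 : a⁻¹ * d * a = j * (a⁻¹ * j * a)⁻¹ := by rw [hd']; group
    rw [hinvj] at h1; exact h1
  -- conjugation by a preserves K
  have conjA : ∀ x ∈ K, a * x * a⁻¹ ∈ K := by
    intro x hx
    induction hx using Subgroup.closure_induction with
    | mem y hy =>
      rcases hy with h | h
      · rw [h, hada]; exact jK
      · simp only [Set.mem_singleton_iff] at h; rw [h, haja]; exact mul_mem dK jK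
    | one => simpa using one_mem K
    | mul x y hx hy px py =>
      have : a * (x * y) * a⁻¹ = (a * x * a⁻¹) * (a * y * a⁻¹) := by group
      rw [this]; exact mul_mem px py
    | inv x hx px =>
      have : a * x⁻¹ * a⁻¹ = (a * x * a⁻¹)⁻¹ := by group
      rw [this]; exact inv_mem px
  have conjA' : ∀ x ∈ K, a⁻¹ * x * a ∈ K := by
    intro x hx
    induction hx using Subgroup.closure_induction with
    | mem y hy =>
      rcases hy with h | h
      · rw [h, hinvd]; exact mul_mem jK (inv_mem dK)
      · simp only [Set.mem_singleton_iff] at h; rw [h, hinvj]; exact dK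
    | one => simpa using one_mem K
    | mul x y hx hy px py =>
      have : a⁻¹ * (x * y) * a = (a⁻¹ * x * a) * (a⁻¹ * y * a) := by group
      rw [this]; exact mul_mem px py
    | inv x hx px =>
      have : a⁻¹ * x⁻¹ * a = (a⁻¹ * x * a)⁻¹ := by group
      rw [this]; exact inv_mem px
  -- conjugation by any element of G preserves K
  have conjG : ∀ g ∈ G, ∀ x ∈ K, g * x * g⁻¹ ∈ K ∧ g⁻¹ * x * g ∈ K := by
    intro g hg
    induction hg using Subgroup.closure_induction with
    | mem y hy =>
      rcases hy with h | h | h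
      · subst h
        exact fun x hx => ⟨mul_mem (mul_mem dK hx) (inv_mem dK),
          mul_mem (mul_mem (inv_mem dK) hx) dK⟩
      · subst h
        exact fun x hx => ⟨mul_mem (mul_mem jK hx) (inv_mem jK),
          mul_mem (mul_mem (inv_mem jK) hx) jK⟩
      · simp only [Set.mem_singleton_iff] at h; subst h
        exact fun x hx => ⟨conjA x hx, conjA' x hx⟩
    | one => intro x hx; simp only [one_mul, inv_one, mul_one]; exact ⟨hx, hx⟩
    | mul g h hg hh pg ph =>
      intro x hx
      constructor
      · have e : (g * h) * x * (g * h)⁻¹ = g * (h * x * h⁻¹) * g⁻¹ := by group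
        rw [e]; exact (pg _ (ph x hx).1).1
      · have e : (g * h)⁻¹ * x * (g * h) = h⁻¹ * (g⁻¹ * x * g) * h := by group
        rw [e]; exact (ph _ (pg x hx).2).2
    | inv g hg pg =>
      intro x hx
      simp only [inv_inv]
      exact ⟨(pg x hx).2, (pg x hx).1⟩
  -- every element of G is k * a^n
  have decomp : ∀ g ∈ G, ∃ (n : ℤ) (k : SU2), k ∈ K ∧ g = k * a ^ n := by
    intro g hg
    induction hg using Subgroup.closure_induction with
    | mem y hy =>
      rcases hy with h | h | h
      · exact ⟨0, d, dK, by rw [h]; group⟩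
      · exact ⟨0, j, jK, by rw [h]; group⟩
      · simp only [Set.mem_singleton_iff] at h
        exact ⟨1, 1, one_mem K, by rw [h]; group⟩
    | one => exact ⟨0, 1, one_mem K, by group⟩
    | mul g h hg hh pg ph =>
      obtain ⟨m, k₁, hk₁, rfl⟩ := pg
      obtain ⟨n, k₂, hk₂, rfl⟩ := ph
      refine ⟨m + n, k₁ * (a ^ m * k₂ * (a ^ m)⁻¹), ?_, by group⟩
      exact mul_mem hk₁ ((conjG _ (zpow_mem aG m) _ hk₂).1)
    | inv g hg pg =>
      obtain ⟨n, k, hk, rfl⟩ := pg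
      refine ⟨-n, (a ^ n)⁻¹ * k⁻¹ * a ^ n, ?_, by group⟩
      exact (conjG _ (zpow_mem aG n) _ (inv_mem hk)).2
  apply le_antisymm
  · -- commutator subgroup ≤ K
    rw [Subgroup.commutator_le]
    intro g₁ hg₁ g₂ hg₂
    obtain ⟨m, k₁, hk₁, rfl⟩ := decomp _ hg₁
    obtain ⟨n, k₂, hk₂, rfl⟩ := decomp _ hg₂
    open scoped commutatorElement in
    have e : ⁅k₁ * a ^ m, k₂ * a ^ n⁆ =
        (k₁ * (a ^ m * k₂ * (a ^ m)⁻¹)) * (k₂ * (a ^ n * k₁ * (a ^ n)⁻¹))⁻¹ := by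
      rw [commutatorElement_def]; group
    rw [e]
    exact mul_mem (mul_mem hk₁ ((conjG _ (zpow_mem aG m) _ hk₂).1))
      (inv_mem (mul_mem hk₂ ((conjG _ (zpow_mem aG n) _ hk₁).1)))
  · -- K ≤ commutator subgroup
    have hdC : d ∈ ⁅G, G⁆ := by
      open scoped commutatorElement in
      have e : ⁅a, j⁆ = d := by rw [commutatorElement_def, R2]; group
      exact e ▸ Subgroup.commutator_mem_commutator aG jG
    have hjC : j ∈ ⁅G, G⁆ := by
      open scoped commutatorElement in
      have e : ⁅a, d⁆ = j * d⁻¹ := by rw [commutatorElement_def, R1]; group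
      have h1 : j * d⁻¹ ∈ ⁅G, G⁆ := e ▸ Subgroup.commutator_mem_commutator aG dG
      have := mul_mem h1 hdC
      simpa using this
    rw [hK, Subgroup.closure_le]
    intro x hx
    rcases hx with h | h
    · exact h ▸ hdC
    · simp only [Set.mem_singleton_iff] at h; exact h ▸ hjC
end

section
/- Let Q₈ be the subgroup of SU(2) generated by diag(i, -i) and [[0, 1], [-1, 0]], and let G be the subgroup of SU(2) generated by Q₈ together with A₀ = (1/2)·[[1+i, 1+i], [-1+i, 1-i]]. Then the abelianization G/[G, G] is isomorphic to the cyclic group ℤ/3ℤ. -/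
open Matrix Complex

namespace SU2aux

/-- The underlying matrix of an element of `SU2`. -/
def mm (x : SU2) : Matrix (Fin 2) (Fin 2) ℂ :=
  ((x : Matrix.unitaryGroup (Fin 2) ℂ) : Matrix (Fin 2) (Fin 2) ℂ)

lemma mm_mul (x y : SU2) : mm (x*y) = mm x * mm y := rfl
lemma mm_one : mm 1 = 1 := rfl
lemma mm_inj : Function.Injective mm := fun _ _ h => Subtype.ext (Subtype.ext h)
lemma mm_inv (x : SU2) : mm x⁻¹ = star (mm x) := by
  simp [mm, Matrix.UnitaryGroup.inv_apply]

section
variable {d j a : SU2}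
  (hd : mm d = !![I, 0; 0, -I])
  (hj : mm j = !![0, 1; -1, 0])
  (ha : mm a = A₀)

include hd hj in
lemma L1 : j*j = d*d := by
  apply mm_inj; simp only [mm_mul, hd, hj]
  ext i k
  fin_cases i <;> fin_cases k <;>
    simp [Matrix.mul_apply, Fin.sum_univ_two, Complex.ext_iff]

include hd in
lemma L2 : (d*d)*(d*d) = 1 := by
  apply mm_inj; simp only [mm_mul, mm_one, hd]
  ext i k
  fin_cases i <;> fin_cases k <;>
    simp [Matrix.mul_apply, Fin.sum_univ_two, Matrix.one_apply, Complex.ext_iff]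

include hd hj in
lemma L3 : j*d = (d*d)*(d*j) := by
  apply mm_inj; simp only [mm_mul, hd, hj]
  ext i k
  fin_cases i <;> fin_cases k <;>
    simp [Matrix.mul_apply, Fin.sum_univ_two, Complex.ext_iff]

include hd ha in
lemma L4 : a*a*a = d*d := by
  apply mm_inj; simp only [mm_mul, hd, ha]
  ext i k
  fin_cases i <;> fin_cases k <;>
    simp [A₀, Matrix.mul_apply, Fin.sum_univ_two, Complex.ext_iff] <;> ring_nf <;> norm_num

include hd hj ha in
lemma L5 : a*d = j*a := by
  apply mm_inj; simp only [mm_mul, hd, hj, ha]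
  ext i k
  fin_cases i <;> fin_cases k <;>
    simp [A₀, Matrix.mul_apply, Fin.sum_univ_two, Complex.ext_iff] <;> ring_nf <;> norm_num

include hd hj ha in
lemma L6 : a*j = d*(j*a) := by
  apply mm_inj; simp only [mm_mul, hd, hj, ha]
  ext i k
  fin_cases i <;> fin_cases k <;>
    simp [A₀, Matrix.mul_apply, Fin.sum_univ_two, Complex.ext_iff] <;> ring_nf <;> norm_num

include hd hj ha in
lemma L7 : d*a = a*(d*j) := by
  apply mm_inj; simp only [mm_mul, hd, hj, ha]
  ext i k
  fin_cases i <;> fin_cases k <;>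
    simp [A₀, Matrix.mul_apply, Fin.sum_univ_two, Complex.ext_iff] <;> ring_nf <;> norm_num

include hd in
lemma mm_dd : mm (d*d) = (-1 : Matrix (Fin 2) (Fin 2) ℂ) := by
  simp only [mm_mul, hd]
  ext i k
  fin_cases i <;> fin_cases k <;>
    simp [Matrix.mul_apply, Fin.sum_univ_two, Complex.ext_iff]

include hd in
lemma Lcentral (x : SU2) : (d*d)*x = x*(d*d) := by
  apply mm_inj
  simp only [mm_mul, mm_dd hd]
  simp

include hd in
lemma d_inv : d⁻¹ = (d*d)*d := by
  rw [eq_comm, eq_inv_iff_mul_eq_one, mul_assoc, L2 hd]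

include hd hj in
lemma j_inv : j⁻¹ = (d*d)*j := by
  rw [eq_comm, eq_inv_iff_mul_eq_one]
  calc (d*d)*j*j = (d*d)*(j*j) := by rw [mul_assoc]
    _ = (d*d)*(d*d) := by rw [L1 hd hj]
    _ = 1 := L2 hd

include hd ha in
lemma a_inv : a⁻¹ = (d*d)*(a*a) := by
  rw [eq_comm, eq_inv_iff_mul_eq_one]
  calc (d*d)*(a*a)*a = (d*d)*(a*a*a) := by rw [mul_assoc]
    _ = (d*d)*(d*d) := by rw [L4 hd ha]
    _ = 1 := L2 hd

include hd hj ha in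
lemma conj_ad : a*d*a⁻¹ = j := by
  rw [L5 hd hj ha, mul_assoc, mul_inv_cancel, mul_one]

include hd hj ha in
lemma conj_aj : a*j*a⁻¹ = d*j := by
  rw [L6 hd hj ha, mul_assoc, mul_assoc, mul_inv_cancel, mul_one]

include hd hj ha in
lemma conj_ad' : a⁻¹*d*a = d*j := by
  rw [mul_assoc, L7 hd hj ha, ← mul_assoc, inv_mul_cancel, one_mul]

include hd hj ha in
lemma conj_aj' : a⁻¹*j*a = d := by
  rw [mul_assoc, ← L5 hd hj ha, ← mul_assoc, inv_mul_cancel, one_mul]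

end
end SU2aux

namespace SU2aux

/-- Elements of `SU2` all of whose matrix entries are Gaussian integers. -/
def Szi : Subgroup SU2 where
  carrier := {x | ∀ p q, ∃ m n : ℤ, mm x p q = m + n*I}
  one_mem' := by
    intro p q
    fin_cases p <;> fin_cases q
    · exact ⟨1, 0, by simp [mm_one, Matrix.one_apply]⟩
    · exact ⟨0, 0, by simp [mm_one, Matrix.one_apply]⟩
    · exact ⟨0, 0, by simp [mm_one, Matrix.one_apply]⟩
    · exact ⟨1, 0, by simp [mm_one, Matrix.one_apply]⟩
  mul_mem' := by
    intro x y hx hy p q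
    obtain ⟨m1, n1, h1⟩ := hx p 0
    obtain ⟨m2, n2, h2⟩ := hx p 1
    obtain ⟨m3, n3, h3⟩ := hy 0 q
    obtain ⟨m4, n4, h4⟩ := hy 1 q
    refine ⟨m1*m3 - n1*n3 + (m2*m4 - n2*n4), m1*n3 + n1*m3 + (m2*n4 + n2*m4), ?_⟩
    rw [mm_mul, Matrix.mul_apply, Fin.sum_univ_two, h1, h2, h3, h4]
    push_cast
    ring_nf
    rw [Complex.I_sq]
    ring
  inv_mem' := by
    intro x hx p q
    obtain ⟨m, n, h⟩ := hx q p
    refine ⟨m, -n, ?_⟩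
    rw [mm_inv, Matrix.star_apply, h]
    push_cast
    simp [Complex.ext_iff]

section
variable {d j a : SU2}
  (hd : mm d = !![I, 0; 0, -I])
  (hj : mm j = !![0, 1; -1, 0])
  (ha : mm a = A₀)

include hd in
lemma d_mem_Szi : d ∈ Szi := by
  intro p q
  fin_cases p <;> fin_cases q
  · exact ⟨0, 1, by simp [hd]⟩
  · exact ⟨0, 0, by simp [hd]⟩
  · exact ⟨0, 0, by simp [hd]⟩
  · exact ⟨0, -1, by simp [hd]⟩

include hj in
lemma j_mem_Szi : j ∈ Szi := by
  intro p q
  fin_cases p <;> fin_cases q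
  · exact ⟨0, 0, by simp [hj]⟩
  · exact ⟨1, 0, by simp [hj]⟩
  · exact ⟨-1, 0, by push_cast [hj]; simp⟩
  · exact ⟨0, 0, by simp [hj]⟩

include ha in
lemma a_not_mem_Szi : a ∉ Szi := by
  intro h
  obtain ⟨m, n, hmn⟩ := h 0 0
  rw [ha] at hmn
  have h1 : ((2:ℂ)⁻¹ • !![1 + I, 1 + I; -1 + I, 1 - I] : Matrix (Fin 2) (Fin 2) ℂ) 0 0
      = (2:ℂ)⁻¹ * (1 + I) := by simp
  rw [A₀, h1] at hmn
  have hre := congrArg Complex.re hmn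
  simp [Complex.add_re, Complex.mul_re] at hre
  have : (2 * m : ℝ) = 1 := by rw [← hre]; norm_num
  have : (2 * m : ℤ) = 1 := by exact_mod_cast this
  omega

include hd ha in
lemma aa_not_mem_Szi : a*a ∉ Szi := by
  intro h
  obtain ⟨m, n, hmn⟩ := h 0 0
  rw [mm_mul, ha] at hmn
  have h1 : (A₀ * A₀) 0 0 = (2:ℂ)⁻¹ * (-1 + I) := by
    rw [A₀]
    simp [Matrix.mul_apply, Fin.sum_univ_two, Complex.ext_iff]
    norm_num
  rw [h1] at hmn
  have hre := congrArg Complex.re hmn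
  simp [Complex.add_re, Complex.mul_re] at hre
  have : (2 * m : ℝ) = -1 := by rw [← hre]; norm_num
  have : (2 * m : ℤ) = -1 := by exact_mod_cast this
  omega

end
end SU2aux

namespace SU2aux
section
variable {d j a : SU2}
  (hd : mm d = !![I, 0; 0, -I])
  (hj : mm j = !![0, 1; -1, 0])
  (ha : mm a = A₀)

include hd hj ha in
lemma conjQ : ∀ q ∈ Subgroup.closure ({d, j} : Set SU2),
    a * q * a⁻¹ ∈ Subgroup.closure ({d, j} : Set SU2) ∧
    a⁻¹ * q * a ∈ Subgroup.closure ({d, j} : Set SU2) := by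
  intro q hq
  induction hq using Subgroup.closure_induction with
  | mem x hx =>
    have hdQ : d ∈ Subgroup.closure ({d, j} : Set SU2) :=
      Subgroup.subset_closure (Set.mem_insert _ _)
    have hjQ : j ∈ Subgroup.closure ({d, j} : Set SU2) :=
      Subgroup.subset_closure (Set.mem_insert_of_mem _ rfl)
    rcases hx with rfl | rfl
    · exact ⟨by rw [conj_ad hd hj ha]; exact hjQ,
        by rw [conj_ad' hd hj ha]; exact mul_mem hdQ hjQ⟩
    · exact ⟨by rw [conj_aj hd hj ha]; exact mul_mem hdQ hjQ,
        by rw [conj_aj' hd hj ha]; exact hdQ⟩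
  | one => constructor <;> · simp
  | mul x y hx hy px py =>
    constructor
    · have : a * (x*y) * a⁻¹ = (a*x*a⁻¹) * (a*y*a⁻¹) := by group
      rw [this]; exact mul_mem px.1 py.1
    · have : a⁻¹ * (x*y) * a = (a⁻¹*x*a) * (a⁻¹*y*a) := by group
      rw [this]; exact mul_mem px.2 py.2
  | inv x hx px =>
    constructor
    · have : a * x⁻¹ * a⁻¹ = (a*x*a⁻¹)⁻¹ := by group
      rw [this]; exact inv_mem px.1
    · have : a⁻¹ * x⁻¹ * a = (a⁻¹*x*a)⁻¹ := by group
      rw [this]; exact inv_mem px.2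

include hd hj ha in
lemma conj_pow : ∀ (k : ℕ), ∀ q ∈ Subgroup.closure ({d, j} : Set SU2),
    (a^k)⁻¹ * q * a^k ∈ Subgroup.closure ({d, j} : Set SU2) := by
  intro k
  induction k with
  | zero => intro q hq; simpa using hq
  | succ n ih =>
    intro q hq
    have : (a^(n+1))⁻¹ * q * a^(n+1) = a⁻¹ * ((a^n)⁻¹ * q * a^n) * a := by
      rw [pow_succ]; group
    rw [this]
    exact (conjQ hd hj ha _ (ih q hq)).2

include hd ha in
lemma inv_pow_a : ∀ k : ℕ, (a^k)⁻¹ = (d*d)^k * a^(2*k) := by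
  intro k
  induction k with
  | zero => simp
  | succ n ih =>
    have hc : Commute (a*a) ((d*d)^n) :=
      Commute.pow_right (((Lcentral hd (a*a)).symm : (a*a)*(d*d) = (d*d)*(a*a))) n
    calc (a^(n+1))⁻¹ = a⁻¹ * (a^n)⁻¹ := by rw [pow_succ, _root_.mul_inv_rev]
      _ = ((d*d) * (a*a)) * ((d*d)^n * a^(2*n)) := by rw [a_inv hd ha, ih]
      _ = ((d*d) * (d*d)^n) * ((a*a) * a^(2*n)) := by
          rw [mul_assoc (d*d) (a*a), ← mul_assoc (a*a), hc.eq, mul_assoc ((d*d)^n),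
            ← mul_assoc (d*d)]
      _ = (d*d)^(n+1) * a^(2*(n+1)) := by
          rw [← pow_succ']
          congr 1
          rw [← pow_two, ← pow_add]
          congr 1
          ring

include hd hj ha in
lemma mem_T : ∀ g ∈ Subgroup.closure ({d, j, a} : Set SU2),
    ∃ (k : ℕ) (q : SU2), q ∈ Subgroup.closure ({d, j} : Set SU2) ∧ g = a^k * q := by
  intro g hg
  have hdQ : d ∈ Subgroup.closure ({d, j} : Set SU2) :=
    Subgroup.subset_closure (Set.mem_insert _ _)
  have hjQ : j ∈ Subgroup.closure ({d, j} : Set SU2) :=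
    Subgroup.subset_closure (Set.mem_insert_of_mem _ rfl)
  induction hg using Subgroup.closure_induction with
  | mem x hx =>
    rcases hx with rfl | rfl | rfl
    · exact ⟨0, x, hdQ, by simp⟩
    · exact ⟨0, x, hjQ, by simp⟩
    · exact ⟨1, 1, one_mem _, by simp⟩
  | one => exact ⟨0, 1, one_mem _, by simp⟩
  | mul x y hx hy px py =>
    obtain ⟨k, q, hq, rfl⟩ := px
    obtain ⟨m, r, hr, rfl⟩ := py
    refine ⟨k + m, ((a^m)⁻¹ * q * a^m) * r, mul_mem (conj_pow hd hj ha m q hq) hr, ?_⟩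
    rw [pow_add]; group
  | inv x hx px =>
    obtain ⟨k, q, hq, rfl⟩ := px
    refine ⟨2*k, (a^(2*k))⁻¹ * (q⁻¹ * (d*d)^k) * a^(2*k),
      conj_pow hd hj ha _ _ (mul_mem (inv_mem hq) (pow_mem (mul_mem hdQ hdQ) k)), ?_⟩
    rw [_root_.mul_inv_rev, inv_pow_a hd ha k]
    group

include hd hj ha in
lemma conjG : ∀ g ∈ Subgroup.closure ({d, j, a} : Set SU2),
    (∀ q ∈ Subgroup.closure ({d, j} : Set SU2),
      g * q * g⁻¹ ∈ Subgroup.closure ({d, j} : Set SU2)) ∧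
    (∀ q ∈ Subgroup.closure ({d, j} : Set SU2),
      g⁻¹ * q * g ∈ Subgroup.closure ({d, j} : Set SU2)) := by
  intro g hg
  have hdQ : d ∈ Subgroup.closure ({d, j} : Set SU2) :=
    Subgroup.subset_closure (Set.mem_insert _ _)
  have hjQ : j ∈ Subgroup.closure ({d, j} : Set SU2) :=
    Subgroup.subset_closure (Set.mem_insert_of_mem _ rfl)
  induction hg using Subgroup.closure_induction with
  | mem x hx =>
    rcases hx with rfl | rfl | rfl
    · exact ⟨fun q hq => mul_mem (mul_mem hdQ hq) (inv_mem hdQ),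
        fun q hq => mul_mem (mul_mem (inv_mem hdQ) hq) hdQ⟩
    · exact ⟨fun q hq => mul_mem (mul_mem hjQ hq) (inv_mem hjQ),
        fun q hq => mul_mem (mul_mem (inv_mem hjQ) hq) hjQ⟩
    · exact ⟨fun q hq => (conjQ hd hj ha q hq).1, fun q hq => (conjQ hd hj ha q hq).2⟩
  | one => exact ⟨fun q hq => by simpa using hq, fun q hq => by simpa using hq⟩
  | mul x y hx hy px py =>
    constructor
    · intro q hq
      have : (x*y) * q * (x*y)⁻¹ = x * (y*q*y⁻¹) * x⁻¹ := by group
      rw [this]; exact px.1 _ (py.1 q hq)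
    · intro q hq
      have : (x*y)⁻¹ * q * (x*y) = y⁻¹ * (x⁻¹*q*x) * y := by group
      rw [this]; exact py.2 _ (px.2 q hq)
  | inv x hx px =>
    exact ⟨fun q hq => by simpa using px.2 q hq, fun q hq => by simpa using px.1 q hq⟩

include hd hj ha in
lemma comm_aj : a*j*a⁻¹*j⁻¹ = d := by
  rw [conj_aj hd hj ha, j_inv hd hj]
  apply mm_inj
  simp only [mm_mul, hd, hj]
  ext i k
  fin_cases i <;> fin_cases k <;>
    simp [Matrix.mul_apply, Fin.sum_univ_two, Complex.ext_iff]

include hd hj ha in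
lemma comm_ad : d⁻¹ * (a*d*a⁻¹*d⁻¹) = j := by
  rw [conj_ad hd hj ha, d_inv hd]
  apply mm_inj
  simp only [mm_mul, hd, hj]
  ext i k
  fin_cases i <;> fin_cases k <;>
    simp [Matrix.mul_apply, Fin.sum_univ_two, Complex.ext_iff]

end
end SU2aux


set_option maxHeartbeats 1000000 in
open SU2aux in
open scoped commutatorElement in
/-- The abelianization of `G = ⟨Q₈, A₀⟩` is isomorphic to the cyclic group `ℤ/3ℤ`. -/
theorem abelianization_iso_zmod3 (d j a : SU2)
    (hd : ((d : Matrix.unitaryGroup (Fin 2) ℂ) : Matrix (Fin 2) (Fin 2) ℂ) = !![I, 0; 0, -I])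
    (hj : ((j : Matrix.unitaryGroup (Fin 2) ℂ) : Matrix (Fin 2) (Fin 2) ℂ) = !![0, 1; -1, 0])
    (ha : ((a : Matrix.unitaryGroup (Fin 2) ℂ) : Matrix (Fin 2) (Fin 2) ℂ) = A₀) :
    Nonempty (Abelianization (Subgroup.closure {d, j, a} : Subgroup SU2) ≃*
      Multiplicative (ZMod 3)) := by
  have hd : mm d = !![I, 0; 0, -I] := hd
  have hj : mm j = !![0, 1; -1, 0] := hj
  have ha : mm a = A₀ := ha
  set Q : Subgroup SU2 := Subgroup.closure {d, j} with hQdef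
  set Gg : Subgroup SU2 := Subgroup.closure {d, j, a} with hGdef
  have hdQ : d ∈ Q := Subgroup.subset_closure (Set.mem_insert _ _)
  have hjQ : j ∈ Q := Subgroup.subset_closure (Set.mem_insert_of_mem _ rfl)
  have hdG : d ∈ Gg := Subgroup.subset_closure (Set.mem_insert _ _)
  have hjG : j ∈ Gg := Subgroup.subset_closure (Set.mem_insert_of_mem _ (Set.mem_insert _ _))
  have haG : a ∈ Gg := Subgroup.subset_closure
    (Set.mem_insert_of_mem _ (Set.mem_insert_of_mem _ rfl))
  -- Q as a subgroup of Gg, and its normality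
  set QG : Subgroup ↥Gg := Q.subgroupOf Gg with hQGdef
  haveI hQGnormal : QG.Normal := by
    constructor
    rintro ⟨n, hn⟩ hmem ⟨g, hg⟩
    rw [Subgroup.mem_subgroupOf] at hmem ⊢
    exact (conjG hd hj ha g hg).1 n hmem
  -- the distinguished generator in the quotient
  set aG : ↥Gg := ⟨a, haG⟩ with haGdef
  set abar : ↥Gg ⧸ QG := QuotientGroup.mk aG with habardef
  have ha3Q : a^3 = d*d := by
    rw [pow_succ, pow_two, L4 hd ha]
  have habar3 : abar^3 = 1 := by
    rw [habardef, ← QuotientGroup.mk_pow, QuotientGroup.eq_one_iff]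
    rw [Subgroup.mem_subgroupOf]
    show (a : SU2)^3 ∈ Q
    rw [ha3Q]
    exact mul_mem hdQ hdQ
  have hpow : ∀ m : ℕ, abar ^ (m % 3) = abar ^ m := by
    intro m
    conv_rhs => rw [← Nat.div_add_mod m 3]
    rw [pow_add, pow_mul, habar3, one_pow, one_mul]
  -- the homomorphism from ZMod 3
  set fm : Multiplicative (ZMod 3) → (↥Gg ⧸ QG) :=
    fun x => abar ^ (Multiplicative.toAdd x).val with hfmdef
  have fm_mul : ∀ x y, fm (x*y) = fm x * fm y := by
    intro x y
    simp only [hfmdef, toAdd_mul]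
    rw [ZMod.val_add, hpow, pow_add]
  set f : Multiplicative (ZMod 3) →* (↥Gg ⧸ QG) :=
    ⟨⟨fm, by simp [hfmdef]⟩, fm_mul⟩ with hfdef
  have hfval : ∀ x : ZMod 3, f (Multiplicative.ofAdd x) = abar ^ x.val := fun x => rfl
  -- surjectivity
  have hsurj : Function.Surjective f := by
    intro x
    induction x using QuotientGroup.induction_on with
    | H g =>
      obtain ⟨k, q, hq, hgq⟩ := mem_T hd hj ha g.1 g.2
      refine ⟨Multiplicative.ofAdd ((k : ℕ) : ZMod 3), ?_⟩
      rw [hfval, ZMod.val_natCast, hpow]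
      rw [habardef, ← QuotientGroup.mk_pow]
      rw [QuotientGroup.eq]
      rw [Subgroup.mem_subgroupOf]
      show ((aG^k)⁻¹ * g : SU2) ∈ Q
      have : ((aG^k)⁻¹ * g : SU2) = (a^k)⁻¹ * (g : SU2) := by
        push_cast
        rfl
      rw [this, hgq, inv_mul_cancel_left]
      exact hq
  -- injectivity
  have hQSzi : Q ≤ Szi := by
    rw [hQdef]
    rw [Subgroup.closure_le]
    rintro x (rfl | rfl)
    · exact d_mem_Szi hd
    · exact j_mem_Szi hj
  have hinj : Function.Injective f := by
    rw [injective_iff_map_eq_one]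
    intro x hx1
    have hcases : ∀ v : ZMod 3, v = 0 ∨ v = 1 ∨ v = 2 := by decide
    have hx : x = Multiplicative.ofAdd (Multiplicative.toAdd x) := rfl
    rcases hcases (Multiplicative.toAdd x) with hv | hv | hv
    · rw [hx, hv]; rfl
    · exfalso
      rw [hx, hv, hfval] at hx1
      have hval1 : (1 : ZMod 3).val = 1 := rfl
      rw [hval1, pow_one] at hx1
      have : abar = 1 := hx1
      rw [habardef, QuotientGroup.eq_one_iff, Subgroup.mem_subgroupOf] at this
      exact a_not_mem_Szi ha (hQSzi this)
    · exfalso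
      rw [hx, hv, hfval] at hx1
      have hval2 : (2 : ZMod 3).val = 2 := rfl
      rw [hval2] at hx1
      have h2 : abar^2 = 1 := hx1
      rw [habardef, ← QuotientGroup.mk_pow, QuotientGroup.eq_one_iff,
        Subgroup.mem_subgroupOf] at h2
      have : ((aG^2 : ↥Gg) : SU2) = a*a := by
        push_cast
        rw [pow_two]
      rw [this] at h2
      exact aa_not_mem_Szi hd ha (hQSzi h2)
  -- commutativity of the quotient
  have hKcomm : ∀ x y : ↥Gg ⧸ QG, x * y = y * x := by
    intro x y
    obtain ⟨u, rfl⟩ := hsurj x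
    obtain ⟨v, rfl⟩ := hsurj y
    rw [← _root_.map_mul, ← _root_.map_mul, mul_comm]
  -- the commutator subgroup is QG
  have hdGcomm : ∀ hg : d ∈ Gg, (⟨d, hg⟩ : ↥Gg) ∈ _root_.commutator ↥Gg := by
    intro hg
    have key : (⟨d, hg⟩ : ↥Gg) = ⁅aG, (⟨j, hjG⟩ : ↥Gg)⁆ := by
      apply Subtype.ext
      show d = a*j*a⁻¹*j⁻¹
      exact (comm_aj hd hj ha).symm
    rw [key, commutator_def]
    exact Subgroup.commutator_mem_commutator (Subgroup.mem_top _) (Subgroup.mem_top _)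
  have hjGcomm : ∀ hg : j ∈ Gg, (⟨j, hg⟩ : ↥Gg) ∈ _root_.commutator ↥Gg := by
    intro hg
    have key : (⟨j, hg⟩ : ↥Gg) = (⟨d, hdG⟩ : ↥Gg)⁻¹ * ⁅aG, (⟨d, hdG⟩ : ↥Gg)⁆ := by
      apply Subtype.ext
      show j = d⁻¹ * (a*d*a⁻¹*d⁻¹)
      exact (comm_ad hd hj ha).symm
    rw [key]
    refine mul_mem (inv_mem (hdGcomm hdG)) ?_
    rw [commutator_def]
    exact Subgroup.commutator_mem_commutator (Subgroup.mem_top _) (Subgroup.mem_top _)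
  have hcommutator : _root_.commutator ↥Gg = QG := by
    apply le_antisymm
    · rw [commutator_def, Subgroup.commutator_le]
      intro g₁ _ g₂ _
      rw [← QuotientGroup.eq_one_iff (N := QG)]
      have hmkc : ((⁅g₁, g₂⁆ : ↥Gg) : ↥Gg ⧸ QG)
          = ⁅((g₁ : ↥Gg) : ↥Gg ⧸ QG), ((g₂ : ↥Gg) : ↥Gg ⧸ QG)⁆ := by
        rfl
      rw [hmkc]
      exact commutatorElement_eq_one_iff_commute.mpr (hKcomm _ _)
    · intro x hx
      have hxQ : (x : SU2) ∈ Q := Subgroup.mem_subgroupOf.mp hx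
      have main : ∀ y (hy : y ∈ Q) (hyG : y ∈ Gg),
          (⟨y, hyG⟩ : ↥Gg) ∈ _root_.commutator ↥Gg := by
        intro y hy
        induction hy using Subgroup.closure_induction with
        | mem w hw =>
          rcases hw with rfl | rfl
          · exact fun hyG => hdGcomm hyG
          · exact fun hyG => hjGcomm hyG
        | one => intro hyG; exact one_mem _
        | mul w v hw hv pw pv =>
          intro hyG
          have hwG : w ∈ Gg := Subgroup.closure_mono (by
            intro t ht
            rcases ht with rfl | rfl
            · exact Set.mem_insert _ _
            · exact Set.mem_insert_of_mem _ (Set.mem_insert _ _)) hw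
          have hvG : v ∈ Gg := Subgroup.closure_mono (by
            intro t ht
            rcases ht with rfl | rfl
            · exact Set.mem_insert _ _
            · exact Set.mem_insert_of_mem _ (Set.mem_insert _ _)) hv
          have : (⟨w*v, hyG⟩ : ↥Gg) = ⟨w, hwG⟩ * ⟨v, hvG⟩ := Subtype.ext rfl
          rw [this]
          exact mul_mem (pw hwG) (pv hvG)
        | inv w hw pw =>
          intro hyG
          have hwG : w ∈ Gg := Subgroup.closure_mono (by
            intro t ht
            rcases ht with rfl | rfl
            · exact Set.mem_insert _ _
            · exact Set.mem_insert_of_mem _ (Set.mem_insert _ _)) hw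
          have : (⟨w⁻¹, hyG⟩ : ↥Gg) = (⟨w, hwG⟩ : ↥Gg)⁻¹ := Subtype.ext rfl
          rw [this]
          exact inv_mem (pw hwG)
      have := main (x : SU2) hxQ x.2
      simpa using this
  exact ⟨(QuotientGroup.quotientMulEquivOfEq hcommutator).trans
    (MulEquiv.ofBijective f ⟨hinj, hsurj⟩).symm⟩
end
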